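/- Derivative bounds for the Carnot–Carathéodory distance in the Reeb direction (estimates (6.11) in the proof of Proposition 6.4): there is an absolute constant C > 0 such that for every c > 0 the following holds. Let φ : (0,∞) → (0,π) satisfy χ(φ(t))·c = t for all t > 0, and define r : (0,∞) → ℝ by r(t) = √c·φ(t)/sin φ(t). Then r is twice differentiable on (0,∞), and for every t > 0 one has |r'(t)| ≤ C/r(t) and |r''(t)| ≤ C/r(t)³. -/

import Mathlib

open Real Filter

/-- The profile function `χ(φ) = φ/(sin φ)² − cot φ` appearing in the explicit formula
for the Carnot–Carathéodory distance to the origin on the Heisenberg group.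
(Note: with Lean's convention `x / 0 = 0`, this formula also gives `χ(0) = 0`.) -/
noncomputable def chi (φ : ℝ) : ℝ := φ / Real.sin φ ^ 2 - Real.cos φ / Real.sin φ

/-- auxiliary: sin x - x cos x, the key quantity. -/
lemma aux_hasDerivAt_F (x : ℝ) :
    HasDerivAt (fun y => Real.sin y - y * Real.cos y) (x * Real.sin x) x := by
  have h := (Real.hasDerivAt_sin x).sub
    ((hasDerivAt_id x).mul (Real.hasDerivAt_cos x))
  refine h.congr_deriv ?_
  simp [id_eq]

lemma aux_F_mono : StrictMonoOn (fun y => Real.sin y - y * Real.cos y) (Set.Icc 0 π) := by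
  apply strictMonoOn_of_deriv_pos (convex_Icc 0 π)
  · exact (Real.continuous_sin.sub (continuous_id.mul Real.continuous_cos)).continuousOn
  · intro x hx
    rw [interior_Icc, Set.mem_Ioo] at hx
    rw [(aux_hasDerivAt_F x).deriv]
    exact mul_pos hx.1 (Real.sin_pos_of_pos_of_lt_pi hx.1 hx.2)

lemma aux_F_pos {x : ℝ} (h0 : 0 < x) (hπ : x ≤ π) :
    0 < Real.sin x - x * Real.cos x := by
  have := aux_F_mono (Set.mem_Icc.2 ⟨le_refl 0, Real.pi_pos.le⟩)
    (Set.mem_Icc.2 ⟨h0.le, hπ⟩) h0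
  simpa using this

/-- Key quantitative lower bound: sin x - x cos x ≥ x³/162 on (0, π). -/
lemma aux_F_lb {x : ℝ} (h0 : 0 < x) (hπ : x < π) :
    x ^ 3 / 162 ≤ Real.sin x - x * Real.cos x := by
  rcases le_or_gt x 1 with hx1 | hx1
  · have hs := Real.sin_gt_sub_cube h0
    have hc : Real.cos x ≤ 1 - x ^ 2 / 2 + |x| ^ 4 * (5 / 96) := by
      have := Real.cos_bound (x := x) (by rw [abs_of_pos h0]; exact hx1)
      have := abs_le.1 this
      linarith [this.2]
    rw [abs_of_pos h0] at hc
    have hxc : x * Real.cos x ≤ x * (1 - x ^ 2 / 2 + x ^ 4 * (5 / 96)) :=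
      mul_le_mul_of_nonneg_left hc h0.le
    have hx2 : x ^ 2 ≤ 1 := by nlinarith
    have hx5 : x ^ 5 ≤ x ^ 3 := by
      calc x ^ 5 = x ^ 3 * x ^ 2 := by ring
        _ ≤ x ^ 3 * 1 := by
            exact mul_le_mul_of_nonneg_left hx2 (pow_pos h0 3).le
        _ = x ^ 3 := by ring
    nlinarith [pow_pos h0 3]
  · have h1 : Real.sin 1 - 1 * Real.cos 1 ≤ Real.sin x - x * Real.cos x := by
      rcases eq_or_lt_of_le hx1.le with h | h
      · rw [← h]
      · exact le_of_lt (aux_F_mono (Set.mem_Icc.2 ⟨by norm_num, by linarith [Real.pi_gt_three]⟩)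
          (Set.mem_Icc.2 ⟨h0.le, hπ.le⟩) h)
    have hs1 : (0.75 : ℝ) < Real.sin 1 := by
      have := Real.sin_gt_sub_cube one_pos; norm_num at this ⊢; linarith
    have hc1 : Real.cos 1 ≤ 1 - 1 / 2 + 5 / 96 := by
      have := abs_le.1 (Real.cos_bound (x := (1:ℝ)) (by norm_num))
      norm_num at this ⊢; linarith [this.2]
    have hxπ : x ^ 3 < 3.15 ^ 3 := by
      have hx : x < 3.15 := lt_trans hπ Real.pi_lt_d2
      exact pow_lt_pow_left₀ hx h0.le (by norm_num)
    nlinarith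

lemma aux_hasDerivAt_chi {x : ℝ} (h0 : 0 < x) (hπ : x < π) :
    HasDerivAt chi (2 * (Real.sin x - x * Real.cos x) / Real.sin x ^ 3) x := by
  have hs : Real.sin x ≠ 0 := (Real.sin_pos_of_pos_of_lt_pi h0 hπ).ne'
  have h1 : HasDerivAt (fun y => y / Real.sin y ^ 2)
      ((1 * Real.sin x ^ 2 - x * (2 * Real.sin x ^ 1 * Real.cos x)) / (Real.sin x ^ 2) ^ 2) x :=
    (hasDerivAt_id x).div ((Real.hasDerivAt_sin x).pow 2) (pow_ne_zero 2 hs)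
  have h2 : HasDerivAt (fun y => Real.cos y / Real.sin y)
      ((-Real.sin x * Real.sin x - Real.cos x * Real.cos x) / Real.sin x ^ 2) x :=
    (Real.hasDerivAt_cos x).div (Real.hasDerivAt_sin x) hs
  have h := h1.sub h2
  refine h.congr_deriv ?_
  have hsc : Real.sin x ^ 2 + Real.cos x ^ 2 = 1 := Real.sin_sq_add_cos_sq x
  field_simp
  linear_combination (Real.sin x) * hsc

lemma aux_chi_pos {x : ℝ} (h0 : 0 < x) (hπ : x < π) : 0 < chi x := by
  have hs : 0 < Real.sin x := Real.sin_pos_of_pos_of_lt_pi h0 hπ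
  have h2 : Real.sin x * Real.cos x < x := by
    have := Real.sin_lt (by linarith : (0:ℝ) < 2 * x)
    have h2x : Real.sin (2 * x) = 2 * Real.sin x * Real.cos x := Real.sin_two_mul x
    nlinarith
  have : chi x = (x - Real.sin x * Real.cos x) / Real.sin x ^ 2 := by
    unfold chi; field_simp
  rw [this]
  exact div_pos (by linarith) (by positivity)

lemma aux_chi_mono : StrictMonoOn chi (Set.Ioo 0 π) := by
  apply strictMonoOn_of_deriv_pos (convex_Ioo 0 π)
  · intro x hx
    exact ((aux_hasDerivAt_chi hx.1 hx.2).continuousAt).continuousWithinAt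
  · intro x hx
    rw [interior_Ioo] at hx
    rw [(aux_hasDerivAt_chi hx.1 hx.2).deriv]
    have hs : 0 < Real.sin x := Real.sin_pos_of_pos_of_lt_pi hx.1 hx.2
    have := aux_F_pos hx.1 hx.2.le
    positivity

/-- estimates (6.11) in the proof of Proposition 6.4: there is an
absolute constant `C > 0` such that, whenever `χ(φ(t))·c = t` for all `t > 0` with
`φ(t) ∈ (0, π)` and `r(t) = √c·φ(t)/sin φ(t)`, the function `r` is twice differentiable
on `(0, ∞)` with `|r'(t)| ≤ C/r(t)` and `|r''(t)| ≤ C/r(t)³`. -/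
theorem reeb_deriv_bounds_cc_dist :
    ∃ C : ℝ, 0 < C ∧ ∀ c : ℝ, 0 < c → ∀ φ r : ℝ → ℝ,
      (∀ t : ℝ, 0 < t → φ t ∈ Set.Ioo 0 π ∧ chi (φ t) * c = t) →
      (∀ t : ℝ, r t = Real.sqrt c * φ t / Real.sin (φ t)) →
      ∀ t : ℝ, 0 < t →
        DifferentiableAt ℝ r t ∧ DifferentiableAt ℝ (deriv r) t ∧
        |deriv r t| ≤ C / r t ∧ |deriv (deriv r) t| ≤ C / r t ^ 3 := by
  refine ⟨41, by norm_num, ?_⟩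
  intro c hc φ r hφ hr
  have hrfun : r = fun y => Real.sqrt c * φ y / Real.sin (φ y) := funext hr
  have hsqc : 0 < Real.sqrt c := Real.sqrt_pos.2 hc
  have hsq : Real.sqrt c * Real.sqrt c = c := Real.mul_self_sqrt hc.le
  have hmem : ∀ u, 0 < u → φ u ∈ Set.Ioo 0 π := fun u hu => (hφ u hu).1
  have heqn : ∀ u, 0 < u → chi (φ u) * c = u := fun u hu => (hφ u hu).2
  -- continuity of φ on (0, ∞)
  have hcont : ∀ u, 0 < u → ContinuousAt φ u := by
    intro u hu
    obtain ⟨ha1, ha2⟩ := hmem u hu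
    rw [ContinuousAt]
    apply tendsto_order.2
    constructor
    · intro b hb
      rcases le_or_gt b 0 with hb0 | hb0
      · filter_upwards [Ioi_mem_nhds hu] with y hy
        exact lt_of_le_of_lt hb0 (hmem y hy).1
      · have hbπ : b < π := lt_trans hb ha2
        have hlt : chi b * c < u := by
          rw [← heqn u hu]
          exact (mul_lt_mul_iff_left₀ hc).2 (aux_chi_mono ⟨hb0, hbπ⟩ ⟨ha1, ha2⟩ hb)
        have hpos : 0 < chi b * c := mul_pos (aux_chi_pos hb0 hbπ) hc
        filter_upwards [Ioi_mem_nhds hlt] with y hy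
        have hy0 : 0 < y := lt_trans hpos hy
        have hlt2 : chi b < chi (φ y) := by
          rw [← mul_lt_mul_iff_left₀ hc, heqn y hy0]; exact hy
        by_contra hcon
        push_neg at hcon
        refine absurd hlt2 (not_lt.2 ?_)
        rcases eq_or_lt_of_le hcon with h | h
        · rw [h]
        · exact (aux_chi_mono (hmem y hy0) ⟨hb0, hbπ⟩ h).le
    · intro b hb
      rcases le_or_gt π b with hbπ | hbπ
      · filter_upwards [Ioi_mem_nhds hu] with y hy
        exact lt_of_lt_of_le (hmem y hy).2 hbπ
      · have hb0 : 0 < b := lt_trans ha1 hb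
        have hlt : u < chi b * c := by
          rw [← heqn u hu]
          exact (mul_lt_mul_iff_left₀ hc).2 (aux_chi_mono ⟨ha1, ha2⟩ ⟨hb0, hbπ⟩ hb)
        filter_upwards [Iio_mem_nhds hlt, Ioi_mem_nhds hu] with y hy1 hy2
        have hlt2 : chi (φ y) < chi b := by
          rw [← mul_lt_mul_iff_left₀ hc, heqn y hy2]; exact hy1
        by_contra hcon
        push_neg at hcon
        refine absurd hlt2 (not_lt.2 ?_)
        rcases eq_or_lt_of_le hcon with h | h
        · rw [h]
        · exact (aux_chi_mono ⟨hb0, hbπ⟩ (hmem y hy2) h).le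
  -- derivative of φ
  have hφd : ∀ u, 0 < u → HasDerivAt φ
      ((2 * (Real.sin (φ u) - φ u * Real.cos (φ u)) / Real.sin (φ u) ^ 3 * c)⁻¹) u := by
    intro u hu
    obtain ⟨ha1, ha2⟩ := hmem u hu
    have hs : 0 < Real.sin (φ u) := Real.sin_pos_of_pos_of_lt_pi ha1 ha2
    have hF : 0 < Real.sin (φ u) - φ u * Real.cos (φ u) := aux_F_pos ha1 ha2.le
    refine HasDerivAt.of_local_left_inverse (hcont u hu)
      ((aux_hasDerivAt_chi ha1 ha2).mul_const c) (by positivity) ?_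
    filter_upwards [Ioi_mem_nhds hu] with y hy using heqn y hy
  -- derivative of r
  have hrd : ∀ u, 0 < u →
      HasDerivAt r (Real.sin (φ u) / (2 * Real.sqrt c)) u := by
    intro u hu
    obtain ⟨ha1, ha2⟩ := hmem u hu
    set a := φ u with ha
    have hs : 0 < Real.sin a := Real.sin_pos_of_pos_of_lt_pi ha1 ha2
    have hF : 0 < Real.sin a - a * Real.cos a := aux_F_pos ha1 ha2.le
    have hinner : HasDerivAt (fun x => Real.sqrt c * x / Real.sin x)
        ((Real.sqrt c * 1 * Real.sin a - Real.sqrt c * a * Real.cos a) / Real.sin a ^ 2) a :=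
      (((hasDerivAt_id a).const_mul (Real.sqrt c))).div (Real.hasDerivAt_sin a) hs.ne'
    have hcomp := hinner.comp u (hφd u hu)
    have hre : r = (fun x => Real.sqrt c * x / Real.sin x) ∘ φ := by
      funext y; simp [Function.comp, hr y]
    rw [← hre, ← ha] at hcomp
    refine hcomp.congr_deriv ?_
    rw [eq_comm, inv_eq_one_div]
    field_simp
    linear_combination (-1) * hsq
  -- conclusions
  intro t ht
  obtain ⟨ha1, ha2⟩ := hmem t ht
  set a := φ t with ha
  have hs : 0 < Real.sin a := Real.sin_pos_of_pos_of_lt_pi ha1 ha2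
  have hF : 0 < Real.sin a - a * Real.cos a := aux_F_pos ha1 ha2.le
  have hrt : r t = Real.sqrt c * a / Real.sin a := hr t
  have hrtpos : 0 < r t := by rw [hrt]; positivity
  -- second derivative
  have hgd : HasDerivAt (fun y => Real.sin (φ y) / (2 * Real.sqrt c))
      (Real.cos a * (2 * (Real.sin a - a * Real.cos a) / Real.sin a ^ 3 * c)⁻¹ /
        (2 * Real.sqrt c)) t :=
    (((Real.hasDerivAt_sin a).comp t (hφd t ht))).div_const (2 * Real.sqrt c)
  have hEv : deriv r =ᶠ[nhds t] (fun y => Real.sin (φ y) / (2 * Real.sqrt c)) :=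
    Filter.eventuallyEq_of_mem (Ioi_mem_nhds ht) (fun y hy => (hrd y hy).deriv)
  have hdd : HasDerivAt (deriv r)
      (Real.cos a * (2 * (Real.sin a - a * Real.cos a) / Real.sin a ^ 3 * c)⁻¹ /
        (2 * Real.sqrt c)) t := hgd.congr_of_eventuallyEq hEv
  refine ⟨(hrd t ht).differentiableAt, hdd.differentiableAt, ?_, ?_⟩
  · rw [(hrd t ht).deriv, le_div_iff₀ hrtpos, hrt,
      abs_of_nonneg (by positivity : (0:ℝ) ≤ Real.sin a / (2 * Real.sqrt c))]
    have key : Real.sin a / (2 * Real.sqrt c) * (Real.sqrt c * a / Real.sin a) = a / 2 := by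
      field_simp
    rw [key]
    have := Real.pi_lt_d2
    linarith
  · rw [hdd.deriv, le_div_iff₀ (pow_pos hrtpos 3), hrt]
    have hd : (0:ℝ) < (2 * (Real.sin a - a * Real.cos a) / Real.sin a ^ 3 * c)⁻¹ := by positivity
    have habs : |Real.cos a * (2 * (Real.sin a - a * Real.cos a) / Real.sin a ^ 3 * c)⁻¹ /
        (2 * Real.sqrt c)| ≤ (2 * (Real.sin a - a * Real.cos a) / Real.sin a ^ 3 * c)⁻¹ /
        (2 * Real.sqrt c) := by
      rw [abs_div, abs_mul, abs_of_pos hd, abs_of_pos (by positivity : (0:ℝ) < 2 * Real.sqrt c)]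
      have : |Real.cos a| ≤ 1 := Real.abs_cos_le_one a
      have h1 : (0:ℝ) ≤ (2 * (Real.sin a - a * Real.cos a) / Real.sin a ^ 3 * c)⁻¹ /
        (2 * Real.sqrt c) := by positivity
      calc |Real.cos a| * (2 * (Real.sin a - a * Real.cos a) / Real.sin a ^ 3 * c)⁻¹ /
            (2 * Real.sqrt c)
          ≤ 1 * (2 * (Real.sin a - a * Real.cos a) / Real.sin a ^ 3 * c)⁻¹ /
            (2 * Real.sqrt c) := by
            gcongr
        _ = (2 * (Real.sin a - a * Real.cos a) / Real.sin a ^ 3 * c)⁻¹ /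
            (2 * Real.sqrt c) := by ring
    refine le_trans (mul_le_mul_of_nonneg_right habs (by positivity)) ?_
    have key : (2 * (Real.sin a - a * Real.cos a) / Real.sin a ^ 3 * c)⁻¹ /
        (2 * Real.sqrt c) * (Real.sqrt c * a / Real.sin a) ^ 3
        = a ^ 3 / (4 * (Real.sin a - a * Real.cos a)) := by
      rw [inv_eq_one_div]
      field_simp
      linear_combination (4) * hsq
    rw [key, div_le_iff₀ (by positivity)]
    have hlb := aux_F_lb ha1 ha2
    nlinarith
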